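/- arXiv:1104.2699 — 2 statements merged into one kernel-verified Lean document; each statement's English description precedes it below -/
import Mathlib

section
/- The Carlitz q-Fibonacci polynomials satisfy the alternative recurrence F_n(x,s,q) = x F_{n-1}(x,qs,q) + q s F_{n-2}(x,q²s,q) for n ≥ 2, where the second argument is scaled by powers of q. -/
def gaussBinom {R : Type*} [CommRing R] (q : R) : ℕ → ℕ → R
  | _, 0 => 1
  | 0, _ + 1 => 0
  | n + 1, k + 1 => q ^ (k + 1) * gaussBinom q n (k + 1) + gaussBinom q n k

def carlitzFib {R : Type*} [CommRing R] (x q : R) (n : ℕ) (s : R) : R :=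
  match n with
  | 0 => 0
  | n + 1 =>
    ∑ k ∈ Finset.range (n / 2 + 1),
      q ^ (k ^ 2) * gaussBinom q (n - k) k * s ^ k * x ^ (n - 2 * k)

lemma gauss_zero {R : Type*} [CommRing R] (q : R) : ∀ n k : ℕ, n < k → gaussBinom q n k = 0
  | 0, _ + 1, _ => rfl
  | n + 1, k + 1, h => by
      rw [gaussBinom, gauss_zero q n (k + 1) (by omega), gauss_zero q n k (by omega)]
      ring

lemma carlitzFib_succ {R : Type*} [CommRing R] (x q s : R) (n : ℕ) :
    carlitzFib x q (n + 1) s =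
      ∑ k ∈ Finset.range (n / 2 + 1),
        q ^ (k ^ 2) * gaussBinom q (n - k) k * s ^ k * x ^ (n - 2 * k) := rfl

theorem carlitzFib_scaled_rec {R : Type*} [CommRing R] (x q s : R) (n : ℕ) (hn : 2 ≤ n) :
    carlitzFib x q n s =
      x * carlitzFib x q (n - 1) (q * s) + q * s * carlitzFib x q (n - 2) (q ^ 2 * s) := by
  obtain ⟨m, rfl⟩ : ∃ m, n = m + 2 := ⟨n - 2, by omega⟩
  rcases m with _ | p
  · simp [carlitzFib, gaussBinom]
  · rw [show p + 1 + 2 - 1 = (p + 1) + 1 by omega, show p + 1 + 2 - 2 = p + 1 by omega,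
      show p + 1 + 2 = (p + 2) + 1 by omega, carlitzFib_succ, carlitzFib_succ, carlitzFib_succ]
    have hext : (∑ k ∈ Finset.range ((p + 1) / 2 + 1),
        q ^ (k ^ 2) * gaussBinom q (p + 1 - k) k * (q * s) ^ k * x ^ (p + 1 - 2 * k)) =
        ∑ k ∈ Finset.range ((p + 2) / 2 + 1),
        q ^ (k ^ 2) * gaussBinom q (p + 1 - k) k * (q * s) ^ k * x ^ (p + 1 - 2 * k) := by
      refine Finset.sum_subset (Finset.range_subset_range.2 (by omega)) (fun k hk hnk => ?_)
      simp only [Finset.mem_range] at hk hnk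
      rw [gauss_zero q (p + 1 - k) k (by omega)]
      ring
    rw [hext, show (p + 2) / 2 + 1 = p / 2 + 1 + 1 by omega, Finset.mul_sum, Finset.mul_sum,
      Finset.sum_range_succ' _ (p / 2 + 1), Finset.sum_range_succ' _ (p / 2 + 1)]
    have h0 : q ^ (0 ^ 2) * gaussBinom q (p + 2 - 0) 0 * s ^ 0 * x ^ (p + 2 - 2 * 0) =
        x * (q ^ (0 ^ 2) * gaussBinom q (p + 1 - 0) 0 * (q * s) ^ 0 * x ^ (p + 1 - 2 * 0)) := by
      simp [gaussBinom]
      ring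
    have hsum : (∑ k ∈ Finset.range (p / 2 + 1),
        q ^ ((k + 1) ^ 2) * gaussBinom q (p + 2 - (k + 1)) (k + 1) * s ^ (k + 1) *
          x ^ (p + 2 - 2 * (k + 1))) =
        ∑ k ∈ Finset.range (p / 2 + 1),
          (x * (q ^ ((k + 1) ^ 2) * gaussBinom q (p + 1 - (k + 1)) (k + 1) * (q * s) ^ (k + 1) *
            x ^ (p + 1 - 2 * (k + 1))) +
          q * s * (q ^ (k ^ 2) * gaussBinom q (p - k) k * (q ^ 2 * s) ^ k * x ^ (p - 2 * k))) := by
      refine Finset.sum_congr rfl (fun k hk => ?_)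
      simp only [Finset.mem_range] at hk
      rw [show p + 2 - (k + 1) = (p - k) + 1 by omega, show p + 1 - (k + 1) = p - k by omega,
        show p + 2 - 2 * (k + 1) = p - 2 * k by omega, gaussBinom]
      by_cases h2 : 2 * k + 1 ≤ p
      · rw [show p - 2 * k = (p + 1 - 2 * (k + 1)) + 1 by omega,
          show (k + 1) ^ 2 = k ^ 2 + 2 * k + 1 by ring]
        ring
      · rw [gauss_zero q (p - k) (k + 1) (by omega),
          show (k + 1) ^ 2 = k ^ 2 + 2 * k + 1 by ring]
        ring
    rw [hsum, Finset.sum_add_distrib, h0]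
    ring
end

section
/- Evaluating the q-Fibonacci polynomials Fib_n at x = 1, s = -1/q gives: Fib_{3n}(1,-1/q,q) = 0, Fib_{3n+1}(1,-1/q,q) = (-1)^n q^{n(3n-1)/2}, and Fib_{3n+2}(1,-1/q,q) = (-1)^n q^{n(3n+1)/2} for all n ≥ 0. -/
def qFib {K : Type*} [Field K] (x q : K) : ℕ → K → K
  | 0, _ => 0
  | 1, _ => 1
  | n + 2, s => x * qFib x q (n + 1) (q * s) + q * s * qFib x q n (q * s)

lemma qFib_add_two {K : Type*} [Field K] (x q : K) (n : ℕ) (s : K) :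
    qFib x q (n + 2) s = x * qFib x q (n + 1) (q * s) + q * s * qFib x q n (q * s) := by
  rw [qFib]

lemma qFib_key {K : Type*} [Field K] (q : K) :
    ∀ (m : ℕ) (s : K), qFib 1 q (m + 4) s =
      qFib 1 q (m + 3) s + q ^ (m + 2) * s * qFib 1 q (m + 1) s
        + q ^ (m + 2) * s ^ 2 * qFib 1 q m s
  | 0, s => by simp [qFib]; ring
  | 1, s => by simp [qFib]; ring
  | (m + 2), s => by
    have ih1 := qFib_key q (m + 1) (q * s)
    have ih2 := qFib_key q m (q * s)
    rw [show m + 1 + 4 = m + 5 by omega, show m + 1 + 3 = m + 4 by omega,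
        show m + 1 + 2 = m + 3 by omega, show m + 1 + 1 = m + 2 by omega] at ih1
    have e6 : qFib 1 q (m + 2 + 4) s
        = 1 * qFib 1 q (m + 5) (q * s) + q * s * qFib 1 q (m + 4) (q * s) := by
      rw [show m + 2 + 4 = (m + 4) + 2 by omega, qFib_add_two, show m + 4 + 1 = m + 5 by omega]
    have e5 : qFib 1 q (m + 2 + 3) s
        = 1 * qFib 1 q (m + 4) (q * s) + q * s * qFib 1 q (m + 3) (q * s) := by
      rw [show m + 2 + 3 = (m + 3) + 2 by omega, qFib_add_two, show m + 3 + 1 = m + 4 by omega]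
    have e3 : qFib 1 q (m + 2 + 1) s
        = 1 * qFib 1 q (m + 2) (q * s) + q * s * qFib 1 q (m + 1) (q * s) := by
      rw [show m + 2 + 1 = (m + 1) + 2 by omega, qFib_add_two, show m + 1 + 1 = m + 2 by omega]
    have e2 : qFib 1 q (m + 2) s
        = 1 * qFib 1 q (m + 1) (q * s) + q * s * qFib 1 q m (q * s) := by
      rw [qFib_add_two]
    rw [e6, e5, e3, e2, ih1, ih2]
    ring

lemma qFib_arec {K : Type*} [Field K] (q : K) (hq : q ≠ 0) (m : ℕ) :
    qFib 1 q (m + 4) (-q⁻¹) =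
      qFib 1 q (m + 3) (-q⁻¹) + q ^ m * qFib 1 q m (-q⁻¹)
        - q ^ (m + 1) * qFib 1 q (m + 1) (-q⁻¹) := by
  rw [qFib_key]
  have h1 : q ^ (m + 2) * (-q⁻¹) = -q ^ (m + 1) := by
    field_simp
    ring
  have h2 : q ^ (m + 2) * (-q⁻¹) ^ 2 = q ^ m := by
    field_simp
    ring
  calc qFib 1 q (m + 3) (-q⁻¹) + q ^ (m + 2) * (-q⁻¹) * qFib 1 q (m + 1) (-q⁻¹)
        + q ^ (m + 2) * (-q⁻¹) ^ 2 * qFib 1 q m (-q⁻¹)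
      = qFib 1 q (m + 3) (-q⁻¹) + (q ^ (m + 2) * (-q⁻¹)) * qFib 1 q (m + 1) (-q⁻¹)
        + (q ^ (m + 2) * (-q⁻¹) ^ 2) * qFib 1 q m (-q⁻¹) := by ring
    _ = _ := by rw [h1, h2]; ring

lemma e1_succ (n : ℕ) : (n + 1) * (3 * (n + 1) - 1) / 2 = n * (3 * n - 1) / 2 + (3 * n + 1) := by
  cases n with
  | zero => decide
  | succ m =>
    have a : 3 * (m + 1 + 1) - 1 = 3 * m + 5 := by omega
    have b : 3 * (m + 1) - 1 = 3 * m + 2 := by omega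
    rw [a, b]
    have h : (m + 1 + 1) * (3 * m + 5) = (m + 1) * (3 * m + 2) + (3 * (m + 1) + 1) * 2 := by ring
    rw [h, Nat.add_mul_div_right _ _ (by norm_num : (0:ℕ) < 2)]

lemma e2_succ (n : ℕ) : (n + 1) * (3 * (n + 1) + 1) / 2 = n * (3 * n + 1) / 2 + (3 * n + 2) := by
  have h : (n + 1) * (3 * (n + 1) + 1) = n * (3 * n + 1) + (3 * n + 2) * 2 := by ring
  rw [h, Nat.add_mul_div_right _ _ (by norm_num : (0:ℕ) < 2)]

theorem qFib_special_values {K : Type*} [Field K] (q : K) (hq : q ≠ 0) (n : ℕ) :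
    qFib 1 q (3 * n) (-q⁻¹) = 0 ∧
    qFib 1 q (3 * n + 1) (-q⁻¹) = (-1) ^ n * q ^ (n * (3 * n - 1) / 2) ∧
    qFib 1 q (3 * n + 2) (-q⁻¹) = (-1) ^ n * q ^ (n * (3 * n + 1) / 2) := by
  have main : ∀ m : ℕ,
      (qFib 1 q (3 * m) (-q⁻¹) = 0 ∧
       qFib 1 q (3 * m + 1) (-q⁻¹) = (-1) ^ m * q ^ (m * (3 * m - 1) / 2) ∧
       qFib 1 q (3 * m + 2) (-q⁻¹) = (-1) ^ m * q ^ (m * (3 * m + 1) / 2)) ∧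
      (qFib 1 q (3 * (m + 1)) (-q⁻¹) = 0 ∧
       qFib 1 q (3 * (m + 1) + 1) (-q⁻¹) = (-1) ^ (m + 1) * q ^ ((m + 1) * (3 * (m + 1) - 1) / 2) ∧
       qFib 1 q (3 * (m + 1) + 2) (-q⁻¹) = (-1) ^ (m + 1) * q ^ ((m + 1) * (3 * (m + 1) + 1) / 2)) := by
    intro m
    induction m with
    | zero =>
      constructor
      · refine ⟨by simp [qFib], by simp [qFib], by simp [qFib]⟩
      · have h3 : qFib 1 q 3 (-q⁻¹) = 0 := by
          simp [qFib]
          field_simp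
          ring
        have h4 : qFib 1 q 4 (-q⁻¹) = -q := by
          simp [qFib]
          field_simp
          try ring
        have h5 : qFib 1 q 5 (-q⁻¹) = -q ^ 2 := by
          simp [qFib]
          field_simp
          try ring
        refine ⟨by simpa using h3, ?_, ?_⟩
        · rw [show 3 * (0 + 1) + 1 = 4 by norm_num, h4]; norm_num
        · rw [show 3 * (0 + 1) + 2 = 5 by norm_num, h5]; norm_num
    | succ n ih =>
      refine ⟨ih.2, ?_⟩
      obtain ⟨hn0, hn1, hn2⟩ := ih.1
      obtain ⟨hm0, hm1, hm2⟩ := ih.2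
      have he2 : (n + 1) * (3 * (n + 1) + 1) / 2 = n * (3 * n + 1) / 2 + (3 * n + 2) :=
        e2_succ n
      have he1' : (n + 2) * (3 * (n + 2) - 1) / 2
          = (n + 1) * (3 * (n + 1) - 1) / 2 + (3 * (n + 1) + 1) := e1_succ (n + 1)
      have he2' : (n + 2) * (3 * (n + 2) + 1) / 2
          = (n + 1) * (3 * (n + 1) + 1) / 2 + (3 * (n + 1) + 2) := e2_succ (n + 1)
      rw [show 3 * (n + 1) = 3 * n + 3 by ring] at hm0
      rw [show 3 * (n + 1) + 1 = 3 * n + 4 by ring] at hm1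
      rw [show 3 * (n + 1) + 2 = 3 * n + 5 by ring] at hm2
      have v6 : qFib 1 q (3 * n + 6) (-q⁻¹) = 0 := by
        have hr := qFib_arec q hq (3 * n + 2)
        rw [show 3 * n + 2 + 4 = 3 * n + 6 by omega, show 3 * n + 2 + 3 = 3 * n + 5 by omega,
            show 3 * n + 2 + 1 = 3 * n + 3 by omega] at hr
        rw [hr, hm2, hm0, hn2, he2, pow_add]
        ring
      have v7 : qFib 1 q (3 * n + 7) (-q⁻¹)
          = (-1) ^ (n + 2) * q ^ ((n + 2) * (3 * (n + 2) - 1) / 2) := by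
        have hr := qFib_arec q hq (3 * n + 3)
        rw [show 3 * n + 3 + 4 = 3 * n + 7 by omega, show 3 * n + 3 + 3 = 3 * n + 6 by omega,
            show 3 * n + 3 + 1 = 3 * n + 4 by omega] at hr
        rw [hr, v6, hm0, hm1, he1', pow_add, show 3 * (n + 1) + 1 = 3 * n + 4 by ring]
        ring
      have v8 : qFib 1 q (3 * n + 8) (-q⁻¹)
          = (-1) ^ (n + 2) * q ^ ((n + 2) * (3 * (n + 2) + 1) / 2) := by
        have hr := qFib_arec q hq (3 * n + 4)
        rw [show 3 * n + 4 + 4 = 3 * n + 8 by omega, show 3 * n + 4 + 3 = 3 * n + 7 by omega,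
            show 3 * n + 4 + 1 = 3 * n + 5 by omega] at hr
        rw [hr, v7, hm1, hm2, he1', he2', pow_add, pow_add,
            show 3 * (n + 1) + 1 = 3 * n + 4 by ring, show 3 * (n + 1) + 2 = 3 * n + 5 by ring]
        ring
      refine ⟨?_, ?_, ?_⟩
      · rw [show 3 * (n + 1 + 1) = 3 * n + 6 by ring]; exact v6
      · rw [show 3 * (n + 1 + 1) + 1 = 3 * n + 7 by ring]; exact v7
      · rw [show 3 * (n + 1 + 1) + 2 = 3 * n + 8 by ring]; exact v8
  exact (main n).1
end
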